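/- Let (G,H) be a compact Friedrichs module and (E,K) a Friedrichs module, with Gelfand triplets G ⊂ H ⊂ G* and E ⊂ K ⊂ E*. Let D ∈ B(G,E), let a, b ∈ B(E,E*), and let z ∈ ℂ be such that: (1) D*aD − z and D*bD − z are bijective maps from G onto G*; (2) a − b ∈ B₀₀ˡ(E,E*); (3) the bounded operator D∘(Δ_{a*} − z̄)⁻¹ : H → K is right decay preserving, where Δ_a, Δ_b, Δ_{a*} denote the operators induced in H by D*aD, D*bD, D*a*D respectively. Then (Δ_a − z)⁻¹ − (Δ_b − z)⁻¹ is a compact operator on H, i.e. Δ_b is a compact perturbation of Δ_a. -/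

import Mathlib

open ContinuousLinearMap

noncomputable section

/-- The space of continuous antilinear forms on `G` (the "adjoint space" `G*`). -/
abbrev AntiDual (G : Type*) [NormedAddCommGroup G] [NormedSpace ℂ G] : Type _ :=
  G →SL[starRingEnd ℂ] ℂ

/-- Given a continuous embedding `e : G → H` of a normed space into a Hilbert space,
the canonical map `H → G*`, `v ↦ (u ↦ ⟪e u, v⟫)`. -/
def toAntiDual {G H : Type*} [NormedAddCommGroup G] [NormedSpace ℂ G]
    [NormedAddCommGroup H] [InnerProductSpace ℂ H] (e : G →L[ℂ] H) :
    H →L[ℂ] AntiDual G :=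
  LinearMap.mkContinuous
    { toFun := fun v => ((innerSL ℂ).flip v).comp e
      map_add' := fun v w => by ext u; simp
      map_smul' := fun c v => by ext u; simp }
    ‖e‖ (fun v => by
      have hv : ‖(innerSL ℂ).flip v‖ ≤ ‖v‖ :=
        opNorm_le_bound _ (norm_nonneg v)
          (fun u => by simpa [mul_comm] using norm_inner_le_norm (𝕜 := ℂ) u v)
      calc ‖((innerSL ℂ).flip v).comp e‖ ≤ ‖(innerSL ℂ).flip v‖ * ‖e‖ := opNorm_comp_le _ _
      _ ≤ ‖v‖ * ‖e‖ := by gcongr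
      _ = ‖e‖ * ‖v‖ := mul_comm _ _)

/-- Precomposition with `D : G →L E`, as a map `E* →L G*`; this is the adjoint `D*`. -/
def precompAntiDual {G E : Type*} [NormedAddCommGroup G] [NormedSpace ℂ G]
    [NormedAddCommGroup E] [NormedSpace ℂ E] (D : G →L[ℂ] E) :
    AntiDual E →L[ℂ] AntiDual G :=
  LinearMap.mkContinuous
    { toFun := fun w => w.comp D
      map_add' := fun w₁ w₂ => by ext u; simp
      map_smul' := fun c w => by ext u; simp }
    ‖D‖ (fun w => by
      calc ‖w.comp D‖ ≤ ‖w‖ * ‖D‖ := opNorm_comp_le _ _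
      _ = ‖D‖ * ‖w‖ := mul_comm _ _)

/-- Auxiliary: the antilinear form `u ↦ conj ⟨v, a u⟩`. -/
def adjointFormAux {E : Type*} [NormedAddCommGroup E] [NormedSpace ℂ E]
    (a : E →L[ℂ] AntiDual E) (v : E) : AntiDual E :=
  LinearMap.mkContinuous
    { toFun := fun u => starRingEnd ℂ (a u v)
      map_add' := fun u₁ u₂ => by simp
      map_smul' := fun c u => by simp }
    (‖a‖ * ‖v‖) (fun u => by
      simp only [LinearMap.coe_mk, AddHom.coe_mk]
      calc ‖starRingEnd ℂ (a u v)‖ = ‖a u v‖ := by simp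
      _ ≤ ‖a u‖ * ‖v‖ := (a u).le_opNorm v
      _ ≤ (‖a‖ * ‖u‖) * ‖v‖ := by gcongr; exact a.le_opNorm u
      _ = ‖a‖ * ‖v‖ * ‖u‖ := by ring)

theorem adjointFormAux_norm_le {E : Type*} [NormedAddCommGroup E] [NormedSpace ℂ E]
    (a : E →L[ℂ] AntiDual E) (v : E) : ‖adjointFormAux a v‖ ≤ ‖a‖ * ‖v‖ :=
  LinearMap.mkContinuous_norm_le _ (mul_nonneg (norm_nonneg a) (norm_nonneg v)) _

@[simp] theorem adjointFormAux_apply {E : Type*} [NormedAddCommGroup E] [NormedSpace ℂ E]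
    (a : E →L[ℂ] AntiDual E) (v u : E) :
    adjointFormAux a v u = starRingEnd ℂ (a u v) := rfl

/-- The adjoint form `a* ∈ B(E,E*)` of `a ∈ B(E,E*)`: `⟨u, a* v⟩ = conj ⟨v, a u⟩`. -/
def adjointForm {E : Type*} [NormedAddCommGroup E] [NormedSpace ℂ E]
    (a : E →L[ℂ] AntiDual E) : E →L[ℂ] AntiDual E :=
  LinearMap.mkContinuous
    { toFun := fun v => adjointFormAux a v
      map_add' := fun v w => by ext u; simp
      map_smul' := fun c v => by ext u; simp }
    ‖a‖ (fun v => adjointFormAux_norm_le a v)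


variable {H K : Type*}

/-- `M` is the multiplier algebra of a Banach module structure on `H`: a non-degenerate
norm-closed subalgebra of `B(H)` possessing a bounded approximate unit. -/
structure IsBanachModule (H : Type*) [NormedAddCommGroup H] [NormedSpace ℂ H]
    (M : Set (H →L[ℂ] H)) : Prop where
  zero_mem : (0 : H →L[ℂ] H) ∈ M
  add_mem : ∀ {A B : H →L[ℂ] H}, A ∈ M → B ∈ M → A + B ∈ M
  smul_mem : ∀ (c : ℂ) {A : H →L[ℂ] H}, A ∈ M → c • A ∈ M
  mul_mem : ∀ {A B : H →L[ℂ] H}, A ∈ M → B ∈ M → A.comp B ∈ M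
  isClosed : IsClosed M
  nondegenerate : Dense (↑(Submodule.span ℂ {u : H | ∃ A ∈ M, ∃ v : H, u = A v}) : Set H)
  approx_unit : ∃ C : ℝ, ∀ ε > (0 : ℝ), ∀ F : Finset (H →L[ℂ] H), ↑F ⊆ M →
    ∃ J ∈ M, ‖J‖ ≤ C ∧ ∀ A ∈ F, ‖J.comp A - A‖ ≤ ε ∧ ‖A.comp J - A‖ ≤ ε

/-- A Hilbert module: a Banach module on a Hilbert space whose multiplier algebra is a
C*-algebra of operators (i.e. is moreover closed under adjoints). -/
structure IsHilbertModule (H : Type*) [NormedAddCommGroup H] [InnerProductSpace ℂ H]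
    [CompleteSpace H] (M : Set (H →L[ℂ] H)) extends IsBanachModule H M : Prop where
  star_mem : ∀ {A : H →L[ℂ] H}, A ∈ M → ContinuousLinearMap.adjoint A ∈ M

/-- `B₀ˡ(H,K)`: the closed linear span of the operators `A ∘ T` with `A` in the multiplier
algebra of `K` and `T ∈ B(H,K)` (operators left vanishing at infinity). -/
def B0l [NormedAddCommGroup H] [NormedSpace ℂ H] [NormedAddCommGroup K] [NormedSpace ℂ K]
    (MK : Set (K →L[ℂ] K)) : Set (H →L[ℂ] K) :=
  closure (↑(Submodule.span ℂ
    {S : H →L[ℂ] K | ∃ A ∈ MK, ∃ T : H →L[ℂ] K, S = A.comp T}) : Set (H →L[ℂ] K))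

/-- `B₀ʳ(H,K)`: the closed linear span of the operators `T ∘ A` with `A` in the multiplier
algebra of `H` and `T ∈ B(H,K)` (operators right vanishing at infinity). -/
def B0r [NormedAddCommGroup H] [NormedSpace ℂ H] [NormedAddCommGroup K] [NormedSpace ℂ K]
    (MH : Set (H →L[ℂ] H)) : Set (H →L[ℂ] K) :=
  closure (↑(Submodule.span ℂ
    {S : H →L[ℂ] K | ∃ A ∈ MH, ∃ T : H →L[ℂ] K, S = T.comp A}) : Set (H →L[ℂ] K))

/-- `S ∈ B(H,K)` is left decay preserving. -/
def LeftDecayPreserving [NormedAddCommGroup H] [NormedSpace ℂ H] [NormedAddCommGroup K]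
    [NormedSpace ℂ K] (MH : Set (H →L[ℂ] H)) (MK : Set (K →L[ℂ] K))
    (S : H →L[ℂ] K) : Prop :=
  ∀ A ∈ MH, S.comp A ∈ B0l MK

/-- `S ∈ B(H,K)` is right decay preserving. -/
def RightDecayPreserving [NormedAddCommGroup H] [NormedSpace ℂ H] [NormedAddCommGroup K]
    [NormedSpace ℂ K] (MH : Set (H →L[ℂ] H)) (MK : Set (K →L[ℂ] K))
    (S : H →L[ℂ] K) : Prop :=
  ∀ A ∈ MK, A.comp S ∈ B0r MH

/-! ### Auxiliary lemmas for the proof of `stmt5` -/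

@[simp] theorem toAntiDual_apply' {G H : Type*} [NormedAddCommGroup G] [NormedSpace ℂ G]
    [NormedAddCommGroup H] [InnerProductSpace ℂ H] (e : G →L[ℂ] H) (v : H) (u : G) :
    toAntiDual e v u = (inner ℂ (e u) v : ℂ) := rfl

@[simp] theorem precompAntiDual_apply' {G E : Type*} [NormedAddCommGroup G] [NormedSpace ℂ G]
    [NormedAddCommGroup E] [NormedSpace ℂ E] (D : G →L[ℂ] E) (w : AntiDual E) (u : G) :
    precompAntiDual D w u = w (D u) := rfl

@[simp] theorem adjointForm_apply' {E : Type*} [NormedAddCommGroup E] [NormedSpace ℂ E]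
    (a : E →L[ℂ] AntiDual E) (v u : E) :
    adjointForm a v u = starRingEnd ℂ (a u v) := rfl

/-- A generic mapping lemma: a continuous, additive, conjugation-semilinear-ish map sends
the closed span of `s` into the closed span of `t` as soon as it sends `s` into the
closed span of `t`. -/
theorem map_closureSpan_mem {X Y : Type*} [NormedAddCommGroup X] [NormedSpace ℂ X]
    [NormedAddCommGroup Y] [NormedSpace ℂ Y] {g : X → Y} (hg : Continuous g) (h0 : g 0 = 0)
    (hadd : ∀ u v, g (u + v) = g u + g v)
    (hsmul : ∀ (c : ℂ) u, ∃ c' : ℂ, g (c • u) = c' • g u)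
    {s : Set X} {t : Set Y}
    (hgen : ∀ u ∈ s, g u ∈ closure (↑(Submodule.span ℂ t) : Set Y))
    {x : X} (hx : x ∈ closure (↑(Submodule.span ℂ s) : Set X)) :
    g x ∈ closure (↑(Submodule.span ℂ t) : Set Y) := by
  set N := (Submodule.span ℂ t).topologicalClosure with hN
  have hNcoe : (N : Set Y) = closure (↑(Submodule.span ℂ t) : Set Y) :=
    Submodule.topologicalClosure_coe _
  have hspan : ∀ u ∈ Submodule.span ℂ s, g u ∈ N := by
    intro u hu
    induction hu using Submodule.span_induction with
    | mem u hu => rw [← SetLike.mem_coe, hNcoe]; exact hgen _ hu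
    | zero => rw [h0]; exact N.zero_mem
    | add u v _ _ ihu ihv => rw [hadd]; exact N.add_mem ihu ihv
    | smul c u _ ih => obtain ⟨c', hc'⟩ := hsmul c u; rw [hc']; exact N.smul_mem c' ih
  have h1 : g x ∈ closure (g '' ↑(Submodule.span ℂ s)) :=
    (image_closure_subset_closure_image hg) (Set.mem_image_of_mem g hx)
  have h2 : closure (g '' ↑(Submodule.span ℂ s)) ⊆ (N : Set Y) := by
    apply closure_minimal _ (Submodule.span ℂ t).isClosed_topologicalClosure
    rintro _ ⟨u, hu, rfl⟩
    exact hspan u hu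
  rw [← hNcoe]; exact h2 h1

/-- `B₀ˡ` is a right ideal: composing on the right with any bounded operator stays in `B₀ˡ`. -/
theorem B0l_comp_right {H₁ H₂ K : Type*} [NormedAddCommGroup H₁] [NormedSpace ℂ H₁]
    [NormedAddCommGroup H₂] [NormedSpace ℂ H₂] [NormedAddCommGroup K] [NormedSpace ℂ K]
    (M : Set (K →L[ℂ] K)) {X : H₁ →L[ℂ] K} (hX : X ∈ B0l (H := H₁) M) (R : H₂ →L[ℂ] H₁) :
    X.comp R ∈ B0l (H := H₂) M := by
  refine map_closureSpan_mem (g := fun Y : H₁ →L[ℂ] K => Y.comp R)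
    (Continuous.clm_comp_const continuous_id R) (by simp) (fun u v => by simp [add_comp])
    (fun c u => ⟨c, by simp [smul_comp]⟩) ?_ hX
  rintro _ ⟨A, hA, T, rfl⟩
  exact subset_closure (Submodule.subset_span ⟨A, hA, T.comp R, (comp_assoc _ _ _).symm⟩)

/-- The adjoint of an operator in `B₀ʳ(H,K)` lies in `B₀ˡ(K,H)`, provided the multiplier
algebra is closed under adjoints. -/
theorem adjoint_mem_B0l_of_mem_B0r {H K : Type*}
    [NormedAddCommGroup H] [InnerProductSpace ℂ H] [CompleteSpace H]
    [NormedAddCommGroup K] [InnerProductSpace ℂ K] [CompleteSpace K]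
    (M : Set (H →L[ℂ] H)) (hM : ∀ {A : H →L[ℂ] H}, A ∈ M → ContinuousLinearMap.adjoint A ∈ M)
    {X : H →L[ℂ] K} (hX : X ∈ B0r (H := H) (K := K) M) :
    ContinuousLinearMap.adjoint X ∈ B0l (H := K) (K := H) M := by
  refine map_closureSpan_mem
    (g := fun Y : H →L[ℂ] K => (ContinuousLinearMap.adjoint : (H →L[ℂ] K) ≃ₗᵢ⋆[ℂ] _) Y)
    (ContinuousLinearMap.adjoint (𝕜 := ℂ) (E := H) (F := K)).continuous (by simp)
    (fun u v => by simp) (fun c u => ⟨starRingEnd ℂ c, LinearIsometryEquiv.map_smulₛₗ ContinuousLinearMap.adjoint c u⟩) ?_ hX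
  rintro _ ⟨A, hA, T, rfl⟩
  refine subset_closure (Submodule.subset_span ⟨ContinuousLinearMap.adjoint A, hM hA,
    ContinuousLinearMap.adjoint T, ?_⟩)
  simp [adjoint_comp]

theorem stmt5_arith {ε C B x y j : ℝ} (hε : 0 < ε) (hC : 0 ≤ C) (hB : 0 ≤ B)
    (hx : x < ε / (3 * (C + 1))) (hx0 : 0 ≤ x) (hy : y ≤ ε / (3 * (B + 1)) * B)
    (hj0 : 0 ≤ j) (hjC : j ≤ C) : x + y + j * x < ε := by
  have h1 : y ≤ ε / 3 := by
    rw [div_mul_eq_mul_div] at hy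
    calc y ≤ ε * B / (3 * (B + 1)) := hy
      _ ≤ ε / 3 := by
        rw [div_le_div_iff₀ (by positivity) (by norm_num)]
        nlinarith
  have h2 : j * x ≤ C * x := by nlinarith
  have h4 : (1 + C) * x < (1 + C) * (ε / (3 * (C + 1))) :=
    mul_lt_mul_of_pos_left hx (by positivity)
  have h5 : (1 + C) * (ε / (3 * (C + 1))) = ε / 3 := by
    field_simp
    ring
  nlinarith

set_option maxHeartbeats 2000000 in
/-- Compactness criterion for operators in divergence form in a compact
Friedrichs module. -/
theorem stmt5 {G H E K : Type*}
    [NormedAddCommGroup G] [InnerProductSpace ℂ G] [CompleteSpace G]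
    [NormedAddCommGroup H] [InnerProductSpace ℂ H] [CompleteSpace H]
    [NormedAddCommGroup E] [InnerProductSpace ℂ E] [CompleteSpace E]
    [NormedAddCommGroup K] [InnerProductSpace ℂ K] [CompleteSpace K]
    -- `(G, H)` is a compact Friedrichs module:
    (MH : Set (H →L[ℂ] H)) (hMH : IsHilbertModule H MH)
    (e : G →L[ℂ] H) (he : Function.Injective ⇑e) (hd : DenseRange ⇑e)
    (hcpt : ∀ A ∈ MH, IsCompactOperator (⇑(A.comp e)))
    -- `(E, K)` is a Friedrichs module:
    (MK : Set (K →L[ℂ] K)) (hMK : IsHilbertModule K MK)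
    (eE : E →L[ℂ] K) (heE : Function.Injective ⇑eE) (hdE : DenseRange ⇑eE)
    -- the data `D`, `a`, `b`, `z`:
    (D : G →L[ℂ] E) (a b : E →L[ℂ] AntiDual E) (z : ℂ)
    -- (1) `D*aD − z` and `D*bD − z` are bijective maps `G → G*`:
    (hbija : Function.Bijective
      ⇑((precompAntiDual D).comp (a.comp D) - z • (toAntiDual e).comp e))
    (hbijb : Function.Bijective
      ⇑((precompAntiDual D).comp (b.comp D) - z • (toAntiDual e).comp e))
    -- (2) `a − b ∈ B₀₀ˡ(E, E*)`:
    (hab : a - b ∈ closure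
      ((fun T : K →L[ℂ] K => (toAntiDual eE).comp (T.comp eE)) '' (B0l (H := K) MK)))
    -- the resolvents `(Δ_a − z)⁻¹` and `(Δ_b − z)⁻¹`:
    (Ra Rb : H →L[ℂ] H)
    (hRa : ∀ v : H, ∃ u : G, e u = Ra v ∧
      ((precompAntiDual D).comp (a.comp D)) u - z • ((toAntiDual e).comp e) u
        = toAntiDual e v)
    (hRb : ∀ v : H, ∃ u : G, e u = Rb v ∧
      ((precompAntiDual D).comp (b.comp D)) u - z • ((toAntiDual e).comp e) u
        = toAntiDual e v)
    -- (3) `D (Δ_{a*} − z̄)⁻¹ : H → K` is right decay preserving: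
    (W : H →L[ℂ] K)
    (hW : ∀ v : H, ∃ u : G,
      ((precompAntiDual D).comp ((adjointForm a).comp D)) u
          - (starRingEnd ℂ z) • ((toAntiDual e).comp e) u = toAntiDual e v ∧
      W v = eE (D u))
    (hWdp : RightDecayPreserving MH MK W) :
    IsCompactOperator (⇑(Ra - Rb)) := by
  classical
  set Sa : G →L[ℂ] AntiDual G :=
    (precompAntiDual D).comp (a.comp D) - z • (toAntiDual e).comp e with hSadef
  set Sb : G →L[ℂ] AntiDual G :=
    (precompAntiDual D).comp (b.comp D) - z • (toAntiDual e).comp e with hSbdef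
  let Φa : G ≃L[ℂ] AntiDual G :=
    ContinuousLinearEquiv.ofBijective Sa (LinearMap.ker_eq_bot.mpr hbija.1)
      (LinearMap.range_eq_top.mpr hbija.2)
  let Φb : G ≃L[ℂ] AntiDual G :=
    ContinuousLinearEquiv.ofBijective Sb (LinearMap.ker_eq_bot.mpr hbijb.1)
      (LinearMap.range_eq_top.mpr hbijb.2)
  set Qa : AntiDual G →L[ℂ] G := (Φa.symm : AntiDual G →L[ℂ] G) with hQadef
  set Qb : AntiDual G →L[ℂ] G := (Φb.symm : AntiDual G →L[ℂ] G) with hQbdef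
  have hQa : ∀ x : AntiDual G, Sa (Qa x) = x := fun x => Φa.apply_symm_apply x
  have hQb : ∀ x : AntiDual G, Sb (Qb x) = x := fun x => Φb.apply_symm_apply x
  have hQa' : ∀ u : G, Qa (Sa u) = u := fun u => Φa.symm_apply_apply u
  -- Step 1: formulas for the resolvents
  have hRaEq : ∀ v : H, Ra v = e (Qa (toAntiDual e v)) := by
    intro v
    obtain ⟨u, hu1, hu2⟩ := hRa v
    have hSu : Sa u = toAntiDual e v := by
      rw [hSadef, ContinuousLinearMap.sub_apply, ContinuousLinearMap.smul_apply]; exact hu2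
    rw [← hu1, ← hSu, hQa']
  have hRbEq : ∀ v : H, Rb v = e (Qb (toAntiDual e v)) := by
    intro v
    obtain ⟨u, hu1, hu2⟩ := hRb v
    have hSu : Sb u = toAntiDual e v := by
      rw [hSbdef, ContinuousLinearMap.sub_apply, ContinuousLinearMap.smul_apply]; exact hu2
    rw [← hu1, ← hSu]
    congr 1
    exact (Φb.symm_apply_apply u).symm
  -- Step 2: formula for the adjoint of W
  set Wd : K →L[ℂ] H := ContinuousLinearMap.adjoint W with hWddef
  have hWdEq : ∀ k : K, Wd k = e (Qa (precompAntiDual D (toAntiDual eE k))) := by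
    have hX : ((e.comp Qa).comp ((precompAntiDual D).comp (toAntiDual eE)))
        = ContinuousLinearMap.adjoint W := by
      rw [eq_adjoint_iff]
      intro k v
      obtain ⟨u, hu1, hu2⟩ := hW v
      set w : G := Qa (precompAntiDual D (toAntiDual eE k)) with hwdef
      have hw : Sa w = precompAntiDual D (toAntiDual eE k) := hQa _
      have hstar : ∀ y : G, toAntiDual e v y = starRingEnd ℂ ((Sa y) u) := by
        intro y
        rw [← hu1, hSadef]
        simp only [ContinuousLinearMap.sub_apply, ContinuousLinearMap.smul_apply,
          ContinuousLinearMap.comp_apply, precompAntiDual_apply', adjointForm_apply',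
          toAntiDual_apply', map_sub, map_mul, smul_eq_mul]
        rw [inner_conj_symm]
      calc (inner ℂ (((e.comp Qa).comp ((precompAntiDual D).comp (toAntiDual eE))) k) v : ℂ)
          = toAntiDual e v w := by
            simp only [ContinuousLinearMap.comp_apply, toAntiDual_apply', hwdef]
        _ = starRingEnd ℂ ((Sa w) u) := hstar w
        _ = starRingEnd ℂ (toAntiDual eE k (D u)) := by rw [hw]; rfl
        _ = inner ℂ k (W v) := by
            rw [hu2, toAntiDual_apply', inner_conj_symm]
    intro k
    rw [hWddef, ← hX]
    simp only [ContinuousLinearMap.comp_apply]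
  -- Step 3: the resolvent identity
  set g2 : (E →L[ℂ] AntiDual E) → (H →L[ℂ] H) := fun c =>
    ((e.comp Qa).comp (precompAntiDual D)).comp
      ((c.comp D).comp (Qb.comp (toAntiDual e))) with hg2def
  have hres : Ra - Rb = g2 (b - a) := by
    ext v
    set ub : G := Qb (toAntiDual e v) with hubdef
    have hub : Sb ub = toAntiDual e v := hQb _
    have key : Qa (toAntiDual e v) - ub = Qa (precompAntiDual D ((b - a) (D ub))) := by
      apply hbija.1
      rw [map_sub, hQa, hQa]
      rw [← hub]
      ext y
      simp only [hSadef, hSbdef, ContinuousLinearMap.sub_apply,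
        ContinuousLinearMap.smul_apply, ContinuousLinearMap.comp_apply,
        precompAntiDual_apply', toAntiDual_apply', smul_eq_mul]
      ring
    have hval : (Ra - Rb) v = e (Qa (toAntiDual e v)) - e ub := by
      rw [ContinuousLinearMap.sub_apply, hRaEq, hRbEq]
    rw [hval, ← map_sub, key]
    simp only [hg2def, ContinuousLinearMap.comp_apply]
    rfl
  -- Step 4: membership of Ra - Rb in B0l MH
  set V : H →L[ℂ] K := (eE.comp D).comp (Qb.comp (toAntiDual e)) with hVdef
  set gensH : Set (H →L[ℂ] H) := {S | ∃ A ∈ MH, ∃ T : H →L[ℂ] H, S = A.comp T} with hgensH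
  have hg2cont : Continuous g2 := by
    have h1 : Continuous fun c : E →L[ℂ] AntiDual E => c.comp D :=
      Continuous.clm_comp_const continuous_id D
    have h2 : Continuous fun c : E →L[ℂ] AntiDual E =>
        (c.comp D).comp (Qb.comp (toAntiDual e)) :=
      Continuous.clm_comp_const h1 (Qb.comp (toAntiDual e))
    exact Continuous.const_clm_comp h2 ((e.comp Qa).comp (precompAntiDual D))
  have himg : ∀ c ∈ ((fun T : K →L[ℂ] K => (toAntiDual eE).comp (T.comp eE))
      '' (B0l (H := K) MK)),
      g2 c ∈ closure (↑(Submodule.span ℂ gensH) : Set (H →L[ℂ] H)) := by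
    rintro _ ⟨T, hT, rfl⟩
    have heq : g2 ((toAntiDual eE).comp (T.comp eE)) = Wd.comp (T.comp V) := by
      ext v
      simp only [hg2def, hVdef, ContinuousLinearMap.comp_apply]
      rw [hWdEq]
    rw [heq]
    have hmem : Wd.comp (T.comp V) ∈ B0l (H := H) (K := H) MH := by
      refine map_closureSpan_mem (g := fun T : K →L[ℂ] K => Wd.comp (T.comp V))
        ?_ (by simp) (fun u v => by simp [add_comp, comp_add])
        (fun c u => ⟨c, by simp [smul_comp, comp_smulₛₗ]⟩) ?_ hT
      · have h1 : Continuous fun T : K →L[ℂ] K => T.comp V :=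
          Continuous.clm_comp_const continuous_id V
        exact Continuous.const_clm_comp h1 Wd
      · rintro _ ⟨A, hA, T', rfl⟩
        have hWdA : Wd.comp A ∈ B0l (H := K) (K := H) MH := by
          have h1 : (ContinuousLinearMap.adjoint A).comp W ∈ B0r (H := H) (K := K) MH :=
            hWdp _ (hMK.star_mem hA)
          have h2 := adjoint_mem_B0l_of_mem_B0r MH (fun hx => hMH.star_mem hx) h1
          rwa [adjoint_comp, adjoint_adjoint, ← hWddef] at h2
        have h3 := B0l_comp_right MH hWdA (T'.comp V)
        have h4 : (Wd.comp A).comp (T'.comp V) = Wd.comp ((A.comp T').comp V) := by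
          ext v; simp only [ContinuousLinearMap.comp_apply]
        show Wd.comp ((A.comp T').comp V) ∈ _
        rw [← h4]
        exact h3
    exact hmem
  have hmem2 : g2 (a - b) ∈ closure (↑(Submodule.span ℂ gensH) : Set (H →L[ℂ] H)) := by
    have h1 : g2 (a - b) ∈ closure (g2 '' ((fun T : K →L[ℂ] K =>
        (toAntiDual eE).comp (T.comp eE)) '' (B0l (H := K) MK))) :=
      (image_closure_subset_closure_image hg2cont) (Set.mem_image_of_mem g2 hab)
    refine closure_minimal ?_ isClosed_closure h1
    rintro _ ⟨c, hc, rfl⟩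
    exact himg c hc
  have hSmem : Ra - Rb ∈ closure (↑(Submodule.span ℂ gensH) : Set (H →L[ℂ] H)) := by
    have hneg : Ra - Rb = -(g2 (a - b)) := by
      rw [hres, (neg_sub a b).symm]
      ext v
      simp only [hg2def, ContinuousLinearMap.comp_apply, ContinuousLinearMap.neg_apply,
        neg_comp, comp_neg, map_neg]
    rw [hneg, ← Submodule.topologicalClosure_coe, SetLike.mem_coe] at *
    exact (Submodule.span ℂ gensH).topologicalClosure.neg_mem (by
      rw [← SetLike.mem_coe, Submodule.topologicalClosure_coe]; exact hmem2)
  -- Step 5: factorization through G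
  set Z : H →L[ℂ] G := Qa.comp ((precompAntiDual D).comp
    (((b - a).comp D).comp (Qb.comp (toAntiDual e)))) with hZdef
  have hfact : Ra - Rb = e.comp Z := by
    rw [hres]; ext v
    simp only [hg2def, hZdef, ContinuousLinearMap.comp_apply]
  -- Step 6: approximate unit and compactness
  obtain ⟨C, hC⟩ := hMH.toIsBanachModule.approx_unit
  have hC0 : 0 ≤ C := by
    obtain ⟨J, _, hJ, _⟩ := hC 1 one_pos ∅ (by simp)
    exact (norm_nonneg J).trans hJ
  have hclosed : IsClosed {T : H →L[ℂ] H | IsCompactOperator ⇑T} :=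
    isClosed_setOf_isCompactOperator
  have hfinal : (Ra - Rb) ∈ closure {T : H →L[ℂ] H | IsCompactOperator ⇑T} := by
    rw [Metric.mem_closure_iff]
    intro ε hε
    have hδ₀ : 0 < ε / (3 * (C + 1)) := by positivity
    obtain ⟨P, hP, hPS⟩ := Metric.mem_closure_iff.mp hSmem _ hδ₀
    obtain ⟨n, f, gf, hsum⟩ := Submodule.mem_span_set'.mp (SetLike.mem_coe.mp hP)
    choose Af hAf Tf hTf using fun i => (gf i).2
    set B : ℝ := ∑ i, ‖f i‖ * ‖Tf i‖ with hB
    have hB0 : 0 ≤ B := Finset.sum_nonneg fun i _ => by positivity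
    have hδ₁ : 0 < ε / (3 * (B + 1)) := by positivity
    obtain ⟨J, hJM, hJnorm, hJap⟩ := hC _ hδ₁ (Finset.image Af Finset.univ) (by
      intro x hx
      simp only [Finset.coe_image, Set.mem_image] at hx
      obtain ⟨i, _, rfl⟩ := hx
      exact hAf i)
    refine ⟨J.comp (Ra - Rb), ?_, ?_⟩
    · show IsCompactOperator ⇑(J.comp (Ra - Rb))
      rw [hfact]
      have heq : J.comp (e.comp Z) = (J.comp e).comp Z := by
        ext v; simp only [ContinuousLinearMap.comp_apply]
      rw [heq, ContinuousLinearMap.coe_comp']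
      exact (hcpt J hJM).comp_clm Z
    · rw [dist_eq_norm]
      have hd1 : ‖(Ra - Rb) - P‖ < ε / (3 * (C + 1)) := by
        rw [← dist_eq_norm]; exact hPS
      have hrepr : J.comp P - P = ∑ i, f i • ((J.comp (Af i) - Af i).comp (Tf i)) := by
        ext v
        have hPv : P v = ∑ i, f i • ((gf i : H →L[ℂ] H) v) := by
          conv_lhs => rw [← hsum]
          simp only [ContinuousLinearMap.sum_apply, ContinuousLinearMap.smul_apply]
        simp only [ContinuousLinearMap.sub_apply, ContinuousLinearMap.coe_comp',
          Function.comp_apply, ContinuousLinearMap.sum_apply,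
          ContinuousLinearMap.smul_apply, hPv, map_sum, map_smul]
        rw [← Finset.sum_sub_distrib]
        refine Finset.sum_congr rfl fun i _ => ?_
        rw [hTf i]
        simp only [ContinuousLinearMap.sub_apply, ContinuousLinearMap.coe_comp',
          Function.comp_apply, smul_sub]
      have hJP : ‖J.comp P - P‖ ≤ (ε / (3 * (B + 1))) * B := by
        calc ‖J.comp P - P‖ ≤ ∑ i, ‖f i • ((J.comp (Af i) - Af i).comp (Tf i))‖ := by
              rw [hrepr]; exact norm_sum_le _ _
          _ ≤ ∑ i, ‖f i‖ * ((ε / (3 * (B + 1))) * ‖Tf i‖) := by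
              refine Finset.sum_le_sum fun i _ => ?_
              rw [norm_smul]
              have h5 : ‖(J.comp (Af i) - Af i).comp (Tf i)‖
                  ≤ ‖J.comp (Af i) - Af i‖ * ‖Tf i‖ := opNorm_comp_le _ _
              have h6 : ‖J.comp (Af i) - Af i‖ ≤ ε / (3 * (B + 1)) := by
                refine (hJap (Af i) ?_).1
                exact Finset.mem_image_of_mem Af (Finset.mem_univ i)
              calc ‖f i‖ * ‖(J.comp (Af i) - Af i).comp (Tf i)‖
                  ≤ ‖f i‖ * (‖J.comp (Af i) - Af i‖ * ‖Tf i‖) := by gcongr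
                _ ≤ ‖f i‖ * ((ε / (3 * (B + 1))) * ‖Tf i‖) := by gcongr
          _ = (ε / (3 * (B + 1))) * B := by
              rw [hB, Finset.mul_sum]
              refine Finset.sum_congr rfl fun i _ => ?_
              ring
      have htri : ‖(Ra - Rb) - J.comp (Ra - Rb)‖
          ≤ ‖(Ra - Rb) - P‖ + ‖J.comp P - P‖ + ‖J‖ * ‖(Ra - Rb) - P‖ := by
        have hdecomp : (Ra - Rb) - J.comp (Ra - Rb)
            = ((Ra - Rb) - P) + (P - J.comp P) + (J.comp P - J.comp (Ra - Rb)) := by abel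
        rw [hdecomp]
        refine (norm_add₃_le).trans ?_
        gcongr
        · rw [norm_sub_rev]
        · have : J.comp P - J.comp (Ra - Rb) = J.comp (P - (Ra - Rb)) := by
            ext v; simp
          rw [this]
          calc ‖J.comp (P - (Ra - Rb))‖ ≤ ‖J‖ * ‖P - (Ra - Rb)‖ := opNorm_comp_le _ _
            _ = ‖J‖ * ‖(Ra - Rb) - P‖ := by rw [norm_sub_rev]
      calc ‖(Ra - Rb) - J.comp (Ra - Rb)‖
          ≤ ‖(Ra - Rb) - P‖ + ‖J.comp P - P‖ + ‖J‖ * ‖(Ra - Rb) - P‖ := htri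
        _ < ε := stmt5_arith hε hC0 hB0 hd1 (norm_nonneg _) hJP (norm_nonneg _) hJnorm
  have := hclosed.closure_subset hfinal
  exact this

end
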